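/- The group presented by ⟨x, y | x⁻¹ y² x = y³, x² = y x y⁻¹⟩ is the trivial group. -/

import Mathlib

/-- The generator `x` of the free group on two generators. -/
def x : FreeGroup Bool := FreeGroup.of true

/-- The generator `y` of the free group on two generators. -/
def y : FreeGroup Bool := FreeGroup.of false

/-- The group ⟨x, y | x⁻¹ y² x = y³, x² = y x y⁻¹⟩ is trivial. -/
theorem presentedGroup_trivial_8 :
    Subsingleton (PresentedGroup ({x⁻¹ * y ^ 2 * x * (y ^ 3)⁻¹, x ^ 2 * (y * x * y⁻¹)⁻¹} :
      Set (FreeGroup Bool))) := by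
  set rels : Set (FreeGroup Bool) :=
    {x⁻¹ * y ^ 2 * x * (y ^ 3)⁻¹, x ^ 2 * (y * x * y⁻¹)⁻¹} with hrels
  let f : FreeGroup Bool →* PresentedGroup rels :=
    QuotientGroup.mk' (Subgroup.normalClosure rels)
  set a : PresentedGroup rels := f x with ha_def
  set b : PresentedGroup rels := f y with hb_def
  have h1 : f (x⁻¹ * y ^ 2 * x * (y ^ 3)⁻¹) = 1 :=
    (QuotientGroup.eq_one_iff _).mpr
      (Subgroup.subset_normalClosure (Set.mem_insert _ _))
  have h2 : f (x ^ 2 * (y * x * y⁻¹)⁻¹) = 1 :=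
    (QuotientGroup.eq_one_iff _).mpr
      (Subgroup.subset_normalClosure (Set.mem_insert_of_mem _ rfl))
  simp only [map_mul, map_inv, map_pow, ← ha_def, ← hb_def] at h1 h2
  have h1' : a⁻¹ * b ^ 2 * a = b ^ 3 := mul_inv_eq_one.mp h1
  have h2' : a ^ 2 = b * a * b⁻¹ := mul_inv_eq_one.mp h2
  have hb2 : b ^ 2 = a * b ^ 3 * a⁻¹ := by rw [← h1']; group
  have h3 : b * a ^ 2 * b⁻¹ = a ^ 4 := by
    calc b * a ^ 2 * b⁻¹ = (b * a * b⁻¹) * (b * a * b⁻¹) := by simp [sq, mul_assoc]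
    _ = a ^ 2 * a ^ 2 := by rw [← h2']
    _ = a ^ 4 := by group
  have h4 : b * a ^ 4 * b⁻¹ = a ^ 8 := by
    calc b * a ^ 4 * b⁻¹ = (b * a ^ 2 * b⁻¹) * (b * a ^ 2 * b⁻¹) := by group
    _ = a ^ 4 * a ^ 4 := by rw [h3]
    _ = a ^ 8 := by group
  have h5 : b ^ 2 * a * (b ^ 2)⁻¹ = a ^ 4 := by
    calc b ^ 2 * a * (b ^ 2)⁻¹ = b * (b * a * b⁻¹) * b⁻¹ := by simp [sq, mul_assoc]
    _ = b * a ^ 2 * b⁻¹ := by rw [← h2']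
    _ = a ^ 4 := h3
  have h6 : b ^ 3 * a * (b ^ 3)⁻¹ = a ^ 8 := by
    calc b ^ 3 * a * (b ^ 3)⁻¹ = b * (b ^ 2 * a * (b ^ 2)⁻¹) * b⁻¹ := by group
    _ = b * a ^ 4 * b⁻¹ := by rw [h5]
    _ = a ^ 8 := h4
  have key : a ^ 4 = a ^ 4 * a ^ 4 := by
    calc a ^ 4 = b ^ 2 * a * (b ^ 2)⁻¹ := h5.symm
    _ = (a * b ^ 3 * a⁻¹) * a * (a * b ^ 3 * a⁻¹)⁻¹ := by rw [← hb2]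
    _ = a * (b ^ 3 * a * (b ^ 3)⁻¹) * a⁻¹ := by group
    _ = a * a ^ 8 * a⁻¹ := by rw [h6]
    _ = a ^ 8 := by group
    _ = a ^ 4 * a ^ 4 := by group
  have ha4 : a ^ 4 = 1 := (left_eq_mul.mp key)
  have ha2 : a ^ 2 = 1 := by
    have h := h3.trans ha4
    calc a ^ 2 = b⁻¹ * (b * a ^ 2 * b⁻¹) * b := by group
    _ = b⁻¹ * 1 * b := by rw [h]
    _ = 1 := by group
  have ha : a = 1 := by
    have h : b * a * b⁻¹ = 1 := h2'.symm.trans ha2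
    calc a = b⁻¹ * (b * a * b⁻¹) * b := by group
    _ = b⁻¹ * 1 * b := by rw [h]
    _ = 1 := by group
  have hb : b = 1 := by
    rw [ha] at h1'
    simp only [inv_one, one_mul, mul_one] at h1'
    have : b ^ 2 = b ^ 2 * b := h1'.trans (pow_succ b 2)
    exact left_eq_mul.mp this
  have hf : f = 1 := by
    apply FreeGroup.ext_hom
    rintro (_ | _)
    · exact hb
    · exact ha
  constructor
  intro g h
  obtain ⟨w, rfl⟩ := QuotientGroup.mk'_surjective (Subgroup.normalClosure rels) g
  obtain ⟨v, rfl⟩ := QuotientGroup.mk'_surjective (Subgroup.normalClosure rels) h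
  show f w = f v
  rw [hf]
  rfl
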